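/- Let c > 0, P_{C,S} ≥ 0, f(P) = exp(-c/(P - P_{C,S})) for P > P_{C,S} and f(P) = 0 otherwise, and let P_a be the larger root of (P - P_{C,S})^2 = cP. Define q(P) = f(P_a)·P/P_a for P ∈ [0, P_a] and q(P) = f(P) for P ≥ P_a. Then q is continuous and concave on [0, ∞), and f(P) ≤ q(P) for all P ≥ 0. -/

import Mathlib

lemma auxA (c x1 x2 : ℝ) (hc : 0 < c) (hx1 : c ≤ x1) (h12 : x1 ≤ x2) :
    c / x2 ^ 2 * Real.exp (-c / x2) ≤ c / x1 ^ 2 * Real.exp (-c / x1) := by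
  have h1 : (0:ℝ) < x1 := lt_of_lt_of_le hc hx1
  have h2 : (0:ℝ) < x2 := h1.trans_le h12
  have h5 : x1 / x2 ≤ c / x2 - c / x1 + 1 := by
    have e : c / x2 - c / x1 + 1 - x1 / x2 = (x2 - x1) * (x1 - c) / (x1 * x2) := by
      field_simp; ring
    have : 0 ≤ (x2 - x1) * (x1 - c) / (x1 * x2) :=
      div_nonneg (mul_nonneg (by linarith) (by linarith)) (by positivity)
    linarith
  have h3 : x1 / x2 ≤ Real.exp (c / x2 - c / x1) := by
    have h4 := Real.add_one_le_exp (c / x2 - c / x1)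
    linarith
  have hkey : Real.exp (-c / x2) ≤ x2 / x1 * Real.exp (-c / x1) := by
    have e1 : Real.exp (-c / x2) = Real.exp (-c / x1) / Real.exp (c / x2 - c / x1) := by
      rw [← Real.exp_sub]; ring_nf
    rw [e1, div_le_iff₀ (Real.exp_pos _)]
    calc Real.exp (-c/x1) = (x1/x2) * (x2/x1 * Real.exp (-c/x1)) := by
          field_simp
      _ ≤ Real.exp (c/x2 - c/x1) * (x2/x1 * Real.exp (-c/x1)) := by
          apply mul_le_mul_of_nonneg_right h3; positivity
      _ = x2/x1 * Real.exp (-c/x1) * Real.exp (c/x2 - c/x1) := by ring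
  calc c / x2 ^ 2 * Real.exp (-c / x2) ≤ c / x2 ^ 2 * (x2 / x1 * Real.exp (-c / x1)) := by
        apply mul_le_mul_of_nonneg_left hkey; positivity
    _ = (c / (x1 * x2)) * Real.exp (-c / x1) := by field_simp
    _ ≤ c / x1 ^ 2 * Real.exp (-c / x1) := by
        apply mul_le_mul_of_nonneg_right _ (Real.exp_pos _).le
        apply div_le_div_of_nonneg_left hc.le (by positivity)
        nlinarith

lemma auxB (c Pcs x xa : ℝ) (hc : 0 < c) (hPcs : 0 ≤ Pcs) (hx : 0 < x)
    (hxxa : x ≤ xa) (hcxa : c ≤ xa) (hrel : xa ^ 2 = c * (xa + Pcs)) :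
    Real.exp (-c / x) ≤ Real.exp (-c / xa) * (x + Pcs) / (xa + Pcs) := by
  have hxa : (0:ℝ) < xa := lt_of_lt_of_le hc hcxa
  have hP : (0:ℝ) < x + Pcs := by linarith
  have hPa : (0:ℝ) < xa + Pcs := by linarith
  have hv0 : 0 ≤ c / x - c / xa := by
    have : c / xa ≤ c / x := div_le_div_of_nonneg_left hc.le hx hxxa
    linarith
  have key : (xa + Pcs) * (x * xa) ≤ (x + Pcs) * (x * xa + c * (xa - x)) := by
    nlinarith [mul_nonneg (mul_nonneg (sq_nonneg (xa - x)) (sub_nonneg.2 hcxa)) hc.le,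
      sq_nonneg (xa - x), mul_nonneg (sq_nonneg (xa - x)) (sub_nonneg.2 hcxa)]
  have h1v : 1 + (c / x - c / xa) = (x * xa + c * (xa - x)) / (x * xa) := by
    field_simp
  have hPalePv : xa + Pcs ≤ (x + Pcs) * (1 + (c / x - c / xa)) := by
    rw [h1v, ← mul_div_assoc, le_div_iff₀ (by positivity)]
    linarith [key]
  have hev : 1 + (c / x - c / xa) ≤ Real.exp (c / x - c / xa) := by
    have := Real.add_one_le_exp (c / x - c / xa); linarith
  have h6 : (xa + Pcs) / (x + Pcs) ≤ Real.exp (c / x - c / xa) := by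
    rw [div_le_iff₀ hP]
    nlinarith [hev, hPalePv]
  have hfin : Real.exp (-(c / x - c / xa)) ≤ (x + Pcs) / (xa + Pcs) := by
    calc Real.exp (-(c / x - c / xa)) = (Real.exp (c / x - c / xa))⁻¹ := Real.exp_neg _
      _ ≤ ((xa + Pcs) / (x + Pcs))⁻¹ := by
          apply inv_anti₀ (by positivity) h6
      _ = (x + Pcs) / (xa + Pcs) := inv_div _ _
  calc Real.exp (-c / x) = Real.exp (-c / xa) * Real.exp (-(c / x - c / xa)) := by
        rw [← Real.exp_add]; ring_nf
    _ ≤ Real.exp (-c / xa) * ((x + Pcs) / (xa + Pcs)) :=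
        mul_le_mul_of_nonneg_left hfin (Real.exp_pos _).le
    _ = Real.exp (-c / xa) * (x + Pcs) / (xa + Pcs) := by ring

/-- The concave envelope q of f (tangent line from the origin up
to Pa, then f) is continuous and concave on [0, ∞), and f ≤ q there. -/
theorem stmt3 (c Pcs : ℝ) (hc : 0 < c) (hPcs : 0 ≤ Pcs)
    (f : ℝ → ℝ)
    (hf : ∀ P : ℝ, f P = if Pcs < P then Real.exp (-c / (P - Pcs)) else 0)
    (Pa : ℝ)
    (hPa : Pa = ((2 * Pcs + c) + Real.sqrt c * Real.sqrt (4 * Pcs + c)) / 2)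
    (q : ℝ → ℝ)
    (hq : ∀ P : ℝ, q P = if P ≤ Pa then f Pa * P / Pa else f P) :
    ContinuousOn q (Set.Ici 0) ∧ ConcaveOn ℝ (Set.Ici 0) q ∧
    ∀ P : ℝ, 0 ≤ P → f P ≤ q P := by
  have hc4 : (0:ℝ) ≤ 4 * Pcs + c := by linarith
  have hsq : c ≤ Real.sqrt c * Real.sqrt (4 * Pcs + c) := by
    have h1 : Real.sqrt c * Real.sqrt c ≤ Real.sqrt c * Real.sqrt (4 * Pcs + c) :=
      mul_le_mul_of_nonneg_left (Real.sqrt_le_sqrt (by linarith)) (Real.sqrt_nonneg c)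
    rwa [Real.mul_self_sqrt hc.le] at h1
  have hcPa : Pcs + c ≤ Pa := by rw [hPa]; linarith
  have hPaPcs : Pcs < Pa := by linarith
  have hPa0 : 0 < Pa := by linarith
  have hxa : c ≤ Pa - Pcs := by linarith
  have hrel : (Pa - Pcs) ^ 2 = c * Pa := by
    have h1 : Real.sqrt c ^ 2 = c := Real.sq_sqrt hc.le
    have h2 : Real.sqrt (4 * Pcs + c) ^ 2 = 4 * Pcs + c := Real.sq_sqrt hc4
    rw [hPa]
    linear_combination (Real.sqrt (4 * Pcs + c) ^ 2 / 4) * h1 + (c / 4) * h2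
  have hfPa : f Pa = Real.exp (-c / (Pa - Pcs)) := by rw [hf, if_pos hPaPcs]
  -- derivative of the exp piece
  have hF : ∀ P : ℝ, Pcs < P → HasDerivAt (fun y => Real.exp (-c / (y - Pcs)))
      (c / (P - Pcs) ^ 2 * Real.exp (-c / (P - Pcs))) P := by
    intro P hP
    have hne : P - Pcs ≠ 0 := ne_of_gt (by linarith)
    have h1 : HasDerivAt (fun y : ℝ => y - Pcs) 1 P := (hasDerivAt_id P).sub_const Pcs
    have h2 : HasDerivAt (fun y : ℝ => (y - Pcs)⁻¹) (-1 / (P - Pcs) ^ 2) P := by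
      simpa [Pi.inv_def] using h1.inv hne
    have h3 : HasDerivAt (fun y : ℝ => -c * (y - Pcs)⁻¹) (c / (P - Pcs) ^ 2) P := by
      have := h2.const_mul (-c)
      rw [show c / (P - Pcs) ^ 2 = -c * (-1 / (P - Pcs) ^ 2) by ring]
      exact this
    have h4 := h3.exp
    have heq : (fun y : ℝ => Real.exp (-c / (y - Pcs)))
        = (fun y : ℝ => Real.exp (-c * (y - Pcs)⁻¹)) := by
      funext y; rw [div_eq_mul_inv]
    rw [heq]
    convert h4 using 1
    rw [div_eq_mul_inv]
    ring
  -- derivative of the linear piece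
  have hL : ∀ P : ℝ, HasDerivAt (fun y => f Pa / Pa * y) (f Pa / Pa) P := by
    intro P; simpa using (hasDerivAt_id P).const_mul (f Pa / Pa)
  have hqL : ∀ P : ℝ, P ≤ Pa → q P = f Pa / Pa * P := by
    intro P h; rw [hq, if_pos h]; ring
  have hqF : ∀ P : ℝ, Pa ≤ P → q P = Real.exp (-c / (P - Pcs)) := by
    intro P h
    rcases eq_or_lt_of_le h with rfl | h'
    · rw [hq, if_pos le_rfl, hfPa]
      field_simp
    · rw [hq, if_neg (not_le.2 h'), hf, if_pos (lt_trans hPaPcs h')]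
  have hDPa : c / (Pa - Pcs) ^ 2 * Real.exp (-c / (Pa - Pcs)) = f Pa / Pa := by
    rw [hfPa, hrel]
    field_simp
  have hqD : ∀ P : ℝ, 0 < P → HasDerivAt q
      (if P ≤ Pa then f Pa / Pa else c / (P - Pcs) ^ 2 * Real.exp (-c / (P - Pcs))) P := by
    intro P hP
    rcases lt_trichotomy P Pa with h | rfl | h
    · rw [if_pos h.le]
      apply (hL P).congr_of_eventuallyEq
      filter_upwards [Iio_mem_nhds h] with y hy
      exact hqL y hy.le
    · rw [if_pos le_rfl]
      have h1 : HasDerivWithinAt q (f P / P) (Set.Iic P) P := by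
        apply ((hL P).hasDerivWithinAt).congr
        · intro y hy; exact hqL y hy
        · exact hqL P le_rfl
      have h2 : HasDerivWithinAt q (f P / P) (Set.Ici P) P := by
        have h3 := (hF P hPaPcs).hasDerivWithinAt (s := Set.Ici P)
        rw [hDPa] at h3
        apply h3.congr
        · intro y hy; exact hqF y hy
        · exact hqF P le_rfl
      have h4 := h1.union h2
      rw [Set.Iic_union_Ici] at h4
      exact hasDerivWithinAt_univ.mp h4
    · rw [if_neg (not_le.2 h)]
      apply (hF P (lt_trans hPaPcs h)).congr_of_eventuallyEq
      filter_upwards [Ioi_mem_nhds h] with y hy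
      exact hqF y hy.le
  have hcont : ContinuousOn q (Set.Ici 0) := by
    intro x hx
    rcases eq_or_lt_of_le (Set.mem_Ici.mp hx) with rfl | hx'
    · apply ContinuousAt.continuousWithinAt
      have he : q =ᶠ[nhds (0:ℝ)] (fun y => f Pa / Pa * y) := by
        filter_upwards [Iio_mem_nhds hPa0] with y hy
        exact hqL y hy.le
      rw [continuousAt_congr he]
      fun_prop
    · exact (hqD x hx').continuousAt.continuousWithinAt
  have hdiff : DifferentiableOn ℝ q (interior (Set.Ici (0:ℝ))) := by
    rw [interior_Ici]
    exact fun x hx => (hqD x hx).differentiableAt.differentiableWithinAt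
  have hanti : AntitoneOn (deriv q) (interior (Set.Ici (0:ℝ))) := by
    rw [interior_Ici]
    intro x hx y hy hxy
    rw [(hqD x hx).deriv, (hqD y hy).deriv]
    by_cases hyPa : y ≤ Pa
    · rw [if_pos hyPa, if_pos (le_trans hxy hyPa)]
    · push_neg at hyPa
      by_cases hxPa : x ≤ Pa
      · rw [if_pos hxPa, if_neg (not_le.2 hyPa), ← hDPa]
        exact auxA c (Pa - Pcs) (y - Pcs) hc hxa (by linarith)
      · push_neg at hxPa
        rw [if_neg (not_le.2 hyPa), if_neg (not_le.2 hxPa)]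
        exact auxA c (x - Pcs) (y - Pcs) hc (by linarith) (by linarith)
  refine ⟨hcont, hanti.concaveOn_of_deriv (convex_Ici 0) hcont hdiff, ?_⟩
  intro P hP
  by_cases hPPa : P ≤ Pa
  · rw [hq, if_pos hPPa, hfPa, hf]
    split_ifs with hPc
    · have hB := auxB c Pcs (P - Pcs) (Pa - Pcs) hc hPcs (by linarith) (by linarith) hxa
        (by linear_combination hrel)
      have e1 : P - Pcs + Pcs = P := by ring
      have e2 : Pa - Pcs + Pcs = Pa := by ring
      rwa [e1, e2] at hB
    · exact div_nonneg (mul_nonneg (Real.exp_pos _).le hP) hPa0.le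
  · rw [hq, if_neg hPPa]
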